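/- Let x_1,...,x_k be nonnegative integers, write W_j = W_j^{(k)}(x_1,...,x_k) and assume all W_j > 0 and the differences W_j − W_{j-1} > 0 for 2 ≤ j ≤ N. Define α = min_{1≤j≤N} { W_j / W_{j-1} } and β = min{ W_1, min_{2≤j≤N} (W_j − W_{j-1})/(W_{j-1} − W_{j-2}) }. Then α ≥ β > α − 1. -/

import Mathlib

/-- The Wronski (complete homogeneous symmetric) function
`W k δ x = ∑_{i₁+⋯+i_k = δ} x₁^{i₁} ⋯ x_k^{i_k}`. -/
def W {R : Type*} [CommSemiring R] (k δ : ℕ) (x : Fin k → R) : R :=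
  ∑ c ∈ Finset.filter (fun c => ∑ i, c i = δ)
      (Fintype.piFinset fun _ : Fin k => Finset.range (δ + 1)),
    ∏ i, x i ^ c i

lemma W_zero {R : Type*} [CommSemiring R] (k : ℕ) (x : Fin k → R) : W k 0 x = 1 := by
  unfold W
  rw [Finset.sum_eq_single (fun _ => 0)]
  · simp
  · intro c hc hne
    simp only [Finset.mem_filter, Fintype.mem_piFinset, Finset.mem_range] at hc
    exfalso; apply hne; funext i
    have := hc.1 i; omega
  · intro h
    exfalso; apply h
    simp [Fintype.mem_piFinset]

open Finset in
lemma sum_eq_one_char {k : ℕ} (c : Fin k → ℕ) (h : ∑ i, c i = 1) :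
    ∃ i, c = Pi.single i 1 := by
  have hne : ∃ i, c i ≠ 0 := by
    by_contra hc
    push_neg at hc
    simp [Finset.sum_eq_zero (fun i _ => hc i)] at h
  obtain ⟨i, hi⟩ := hne
  have hle : c i ≤ 1 := h ▸ Finset.single_le_sum (fun j _ => Nat.zero_le _) (Finset.mem_univ i)
  have hci : c i = 1 := by omega
  have hrest : ∑ j ∈ Finset.univ.erase i, c j = 0 := by
    have := Finset.add_sum_erase Finset.univ c (Finset.mem_univ i)
    omega
  refine ⟨i, funext fun j => ?_⟩
  by_cases hj : j = i
  · subst hj; simp [hci]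
  · rw [Pi.single_apply, if_neg hj]
    exact Finset.sum_eq_zero_iff.mp hrest j (Finset.mem_erase.mpr ⟨hj, Finset.mem_univ j⟩)

lemma single_mem_filter {k δ : ℕ} (i : Fin k) (m : ℕ) (hm : m = δ) :
    Pi.single i m ∈ Finset.filter (fun c => ∑ j, c j = δ)
      (Fintype.piFinset fun _ : Fin k => Finset.range (δ + 1)) := by
  subst hm
  simp only [Finset.mem_filter, Fintype.mem_piFinset, Finset.mem_range]
  constructor
  · intro j
    rw [Pi.single_apply]
    split <;> omega
  · simp

lemma W_one {R : Type*} [CommSemiring R] (k : ℕ) (x : Fin k → R) :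
    W k 1 x = ∑ i, x i := by
  unfold W
  have hset : Finset.filter (fun c => ∑ i, c i = 1)
      (Fintype.piFinset fun _ : Fin k => Finset.range 2)
      = Finset.image (fun i => Pi.single i 1) Finset.univ := by
    ext c
    simp only [Finset.mem_image, Finset.mem_univ, true_and]
    constructor
    · intro hc
      rw [Finset.mem_filter] at hc
      obtain ⟨i, hi⟩ := sum_eq_one_char c hc.2
      exact ⟨i, hi.symm⟩
    · rintro ⟨i, rfl⟩
      exact single_mem_filter i 1 rfl
  rw [hset, Finset.sum_image]
  · refine Finset.sum_congr rfl fun i _ => ?_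
    rw [Finset.prod_eq_single i]
    · simp
    · intro j _ hj
      rw [Pi.single_apply, if_neg hj, pow_zero]
    · simp
  · intro i _ j _ hij
    have := congrFun hij i
    simp [Pi.single_apply] at this
    by_contra h
    exact h this
lemma sum_image_le' {α β M : Type*} [DecidableEq α] [DecidableEq β] [AddCommMonoid M] [PartialOrder M] [IsOrderedAddMonoid M]
    (s : Finset α) (g : α → β) (t : β → M) (ht : ∀ b, 0 ≤ t b) :
    ∑ b ∈ s.image g, t b ≤ ∑ a ∈ s, t (g a) := by
  induction s using Finset.induction_on with
  | empty => simp
  | @insert a s ha ih =>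
    rw [Finset.image_insert, Finset.sum_insert ha]
    by_cases hg : g a ∈ Finset.image g s
    · rw [Finset.insert_eq_self.mpr hg]
      exact ih.trans (le_add_of_nonneg_left (ht _))
    · rw [Finset.sum_insert hg]
      exact add_le_add_right ih _

lemma sum_eq_two_char {k : ℕ} (c : Fin k → ℕ) (h : ∑ i, c i = 2) :
    ∃ i j, c = Pi.single i 1 + Pi.single j 1 := by
  have hne : ∃ i, c i ≠ 0 := by
    by_contra hc
    push_neg at hc
    simp [Finset.sum_eq_zero (fun i _ => hc i)] at h
  obtain ⟨i, hi⟩ := hne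
  have hsplit := Finset.add_sum_erase Finset.univ c (Finset.mem_univ i)
  have hc' : ∀ l, Function.update c i (c i - 1) l = if l = i then c i - 1 else c l := by
    intro l
    rw [Function.update_apply]
  set c' : Fin k → ℕ := Function.update c i (c i - 1) with hdef
  clear_value c'
  have hagree : ∀ j ∈ Finset.univ.erase i, c' j = c j := by
    intro j hj
    rw [hc' j, if_neg (Finset.mem_erase.mp hj).1]
  have hsum' : ∑ j, c' j = 1 := by
    have h1 := Finset.add_sum_erase Finset.univ c' (Finset.mem_univ i)
    rw [Finset.sum_congr rfl hagree] at h1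
    have h2 : c' i = c i - 1 := by rw [hc' i, if_pos rfl]
    have h3 : (Finset.univ.erase i).sum c = ∑ x ∈ Finset.univ.erase i, c x := rfl
    omega
  obtain ⟨j, hj⟩ := sum_eq_one_char c' hsum'
  have hci : 1 ≤ c i := Nat.one_le_iff_ne_zero.mpr hi
  refine ⟨i, j, funext fun l => ?_⟩
  have hl : c' l = (if l = j then 1 else 0 : ℕ) := by
    rw [hj, Pi.single_apply]
  simp only [Pi.add_apply, Pi.single_apply]
  rw [hc' l] at hl
  by_cases hli : l = i
  · rw [if_pos hli] at hl
    subst hli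
    rw [if_pos rfl]
    omega
  · rw [if_neg hli] at hl
    rw [if_neg hli]
    omega

lemma prod_pow_single {R : Type*} [CommSemiring R] {k : ℕ} (x : Fin k → R) (j : Fin k) :
    ∏ i, x i ^ Pi.single j (1 : ℕ) i = x j := by
  rw [Finset.prod_eq_single j]
  · simp
  · intro l _ hl
    rw [Pi.single_apply, if_neg hl, pow_zero]
  · simp

lemma W_two_le {k : ℕ} (x : Fin k → ℤ) (hx : ∀ i, 0 ≤ x i) :
    W k 2 x ≤ (W k 1 x) ^ 2 := by
  have h1 : (W k 1 x) ^ 2 = ∑ p ∈ Finset.univ ×ˢ Finset.univ, x p.1 * x p.2 := by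
    rw [W_one, sq, Finset.sum_mul_sum, ← Finset.sum_product']
  rw [h1]
  unfold W
  set g : Fin k × Fin k → (Fin k → ℕ) := fun p => Pi.single p.1 1 + Pi.single p.2 1 with hg
  set t : (Fin k → ℕ) → ℤ := fun c => ∏ i, x i ^ c i with htdef
  have ht : ∀ c, 0 ≤ t c := fun c => Finset.prod_nonneg (fun i _ => pow_nonneg (hx i) _)
  have hsub : Finset.filter (fun c => ∑ i, c i = 2)
      (Fintype.piFinset fun _ : Fin k => Finset.range 3)
      ⊆ (Finset.univ ×ˢ Finset.univ).image g := by
    intro c hc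
    rw [Finset.mem_filter] at hc
    obtain ⟨i, j, hij⟩ := sum_eq_two_char c hc.2
    exact Finset.mem_image.mpr ⟨(i, j), Finset.mem_product.mpr ⟨Finset.mem_univ _, Finset.mem_univ _⟩, hij.symm⟩
  calc ∑ c ∈ Finset.filter (fun c => ∑ i, c i = 2)
        (Fintype.piFinset fun _ : Fin k => Finset.range 3), t c
      ≤ ∑ c ∈ (Finset.univ ×ˢ Finset.univ).image g, t c :=
        Finset.sum_le_sum_of_subset_of_nonneg hsub (fun c _ _ => ht c)
    _ ≤ ∑ p ∈ Finset.univ ×ˢ Finset.univ, t (g p) := sum_image_le' _ g t ht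
    _ = ∑ p ∈ Finset.univ ×ˢ Finset.univ, x p.1 * x p.2 := by
        refine Finset.sum_congr rfl fun p _ => ?_
        rw [htdef, hg]
        simp only [Pi.add_apply]
        simp_rw [pow_add]
        rw [Finset.prod_mul_distrib, prod_pow_single, prod_pow_single]
lemma key (N : ℕ) (hN : 1 ≤ N) (f : ℕ → ℝ) (f0 : f 0 = 1)
    (fpos : ∀ j ≤ N, 0 < f j)
    (fmono : ∀ j, 2 ≤ j → j ≤ N → f (j - 1) < f j)
    (f01 : 2 ≤ N → f 0 < f 1) :
    sInf ({f 1} ∪ {r | ∃ j, 2 ≤ j ∧ j ≤ N ∧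
        r = (f j - f (j - 1)) / (f (j - 1) - f (j - 2))})
      ≤ sInf {r | ∃ j, 1 ≤ j ∧ j ≤ N ∧ r = f j / f (j - 1)} ∧
    sInf {r | ∃ j, 1 ≤ j ∧ j ≤ N ∧ r = f j / f (j - 1)} - 1
      < sInf ({f 1} ∪ {r | ∃ j, 2 ≤ j ∧ j ≤ N ∧
        r = (f j - f (j - 1)) / (f (j - 1) - f (j - 2))}) := by
  set A : Set ℝ := {r | ∃ j, 1 ≤ j ∧ j ≤ N ∧ r = f j / f (j - 1)} with hA
  set D : Set ℝ := {r | ∃ j, 2 ≤ j ∧ j ≤ N ∧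
      r = (f j - f (j - 1)) / (f (j - 1) - f (j - 2))} with hD
  set B : Set ℝ := {f 1} ∪ D with hB
  have hAfin : A.Finite := by
    apply Set.Finite.subset ((Set.finite_Icc 1 N).image (fun j => f j / f (j - 1)))
    rintro r ⟨j, h1, h2, rfl⟩
    exact ⟨j, ⟨h1, h2⟩, rfl⟩
  have hDfin : D.Finite := by
    apply Set.Finite.subset ((Set.finite_Icc 2 N).image
      (fun j => (f j - f (j - 1)) / (f (j - 1) - f (j - 2))))
    rintro r ⟨j, h1, h2, rfl⟩
    exact ⟨j, ⟨h1, h2⟩, rfl⟩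
  have hBfin : B.Finite := (Set.finite_singleton _).union hDfin
  have hAmem : f 1 / f 0 ∈ A := ⟨1, le_refl 1, hN, rfl⟩
  have hAne : A.Nonempty := ⟨_, hAmem⟩
  have hBne : B.Nonempty := ⟨f 1, Or.inl rfl⟩
  have hbddA : BddBelow A := hAfin.bddBelow
  have hbddB : BddBelow B := hBfin.bddBelow
  have hd : ∀ j, 2 ≤ j → j ≤ N → 0 < f (j - 1) - f (j - 2) := by
    intro j h2 hjN
    rcases eq_or_lt_of_le h2 with he | hl
    · subst he
      have := f01 hjN
      rw [f0] at this ⊢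
      norm_num
      linarith
    · have h3 : 3 ≤ j := hl
      have := fmono (j - 1) (by omega) (by omega)
      have hidx : j - 1 - 1 = j - 2 := by omega
      rw [hidx] at this
      linarith
  have hstep : ∀ j, 1 ≤ j → j ≤ N → sInf B ≤ f j / f (j - 1) := by
    intro j hj1
    induction j, hj1 using Nat.le_induction with
    | base =>
      intro _
      show sInf B ≤ f 1 / f 0
      rw [f0, div_one]
      exact csInf_le hbddB (Or.inl rfl)
    | succ n hn ih =>
      intro hsN
      have hnN : n ≤ N := by omega
      have ihn := ih hnN
      have hb : 0 < f (n - 1) := fpos _ (by omega)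
      have ha : 0 < f n := fpos _ hnN
      have hc : 0 < f (n + 1) := fpos _ hsN
      have hden : 0 < f n - f (n - 1) := hd (n + 1) (by omega) hsN
      have hmem : (f (n + 1) - f n) / (f n - f (n - 1)) ∈ B :=
        Or.inr ⟨n + 1, by omega, hsN, rfl⟩
      have hβd : sInf B ≤ (f (n + 1) - f n) / (f n - f (n - 1)) := csInf_le hbddB hmem
      have h1 : sInf B * (f n - f (n - 1)) ≤ f (n + 1) - f n := (le_div_iff₀ hden).mp hβd
      have h2 : sInf B * f (n - 1) ≤ f n := (le_div_iff₀ hb).mp ihn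
      show sInf B ≤ f (n + 1) / f n
      rw [le_div_iff₀ ha]
      nlinarith
  constructor
  · obtain ⟨m, hm1, hmN, hmeq⟩ := hAne.csInf_mem hAfin
    rw [hmeq]
    exact hstep m hm1 hmN
  · have hβB := hBne.csInf_mem hBfin
    rcases hβB with h1 | ⟨j, hj2, hjN, heq⟩
    · have hαle : sInf A ≤ f 1 := by
        have := csInf_le hbddA hAmem
        rwa [f0, div_one] at this
      rw [Set.mem_singleton_iff] at h1
      rw [h1]
      linarith
    · have hb : 0 < f (j - 2) := fpos _ (by omega)
      have ha : 0 < f (j - 1) := fpos _ (by omega)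
      have hden := hd j hj2 hjN
      have hnum : 0 < f j - f (j - 1) := sub_pos.mpr (fmono j hj2 hjN)
      have hα1 : sInf A ≤ f j / f (j - 1) := csInf_le hbddA ⟨j, by omega, hjN, rfl⟩
      have hα2 : sInf A ≤ f (j - 1) / f (j - 2) := by
        refine csInf_le hbddA ⟨j - 1, by omega, by omega, ?_⟩
        have hidx : j - 1 - 1 = j - 2 := by omega
        rw [hidx]
      rw [heq]
      rcases le_or_gt (sInf A) 1 with hα | hα
      · have hpos' : 0 < (f j - f (j - 1)) / (f (j - 1) - f (j - 2)) := div_pos hnum hden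
        linarith
      · rw [lt_div_iff₀ hden]
        have h1 : sInf A * f (j - 1) ≤ f j := (le_div_iff₀ ha).mp hα1
        have h2 : sInf A * f (j - 2) ≤ f (j - 1) := (le_div_iff₀ hb).mp hα2
        nlinarith [mul_pos (sub_pos.mpr hα) hb]
theorem stmt8 (k N : ℕ) (hN : 1 ≤ N) (x : Fin k → ℤ) (hx : ∀ i, 0 ≤ x i)
    (hpos : ∀ j ≤ N, 0 < W k j x)
    (hdiff : ∀ j, 2 ≤ j → j ≤ N → W k (j - 1) x < W k j x) :
    let α : ℝ := sInf {r | ∃ j, 1 ≤ j ∧ j ≤ N ∧ r = ((W k j x : ℤ) : ℝ) / ((W k (j - 1) x : ℤ) : ℝ)}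
    let β : ℝ := sInf ({((W k 1 x : ℤ) : ℝ)} ∪
      {r | ∃ j, 2 ≤ j ∧ j ≤ N ∧
        r = (((W k j x : ℤ) : ℝ) - ((W k (j - 1) x : ℤ) : ℝ)) /
            (((W k (j - 1) x : ℤ) : ℝ) - ((W k (j - 2) x : ℤ) : ℝ))})
    β ≤ α ∧ α - 1 < β := by
  intro α β
  have f0 : ((W k 0 x : ℤ) : ℝ) = 1 := by rw [W_zero]; norm_num
  have fpos : ∀ j ≤ N, (0 : ℝ) < ((W k j x : ℤ) : ℝ) := by
    intro j hj
    exact_mod_cast hpos j hj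
  have fmono : ∀ j, 2 ≤ j → j ≤ N →
      ((W k (j - 1) x : ℤ) : ℝ) < ((W k j x : ℤ) : ℝ) := by
    intro j h2 hjN
    exact_mod_cast hdiff j h2 hjN
  have f01 : 2 ≤ N → ((W k 0 x : ℤ) : ℝ) < ((W k 1 x : ℤ) : ℝ) := by
    intro h2N
    have h1 : 0 < W k 1 x := hpos 1 hN
    have h2 : W k 1 x < W k 2 x := hdiff 2 le_rfl h2N
    have h3 : W k 2 x ≤ (W k 1 x) ^ 2 := W_two_le x hx
    have h4 : 1 < W k 1 x := by nlinarith
    rw [W_zero]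
    exact_mod_cast h4
  exact key N hN (fun j => ((W k j x : ℤ) : ℝ)) f0 fpos fmono f01
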